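/- Let n ≥ 2 be an integer and define u : ℂⁿ → ℝ by u(z₁, …, zₙ) = n^{2/n} · (1 + |z₁|² + ⋯ + |z_{n−1}|²) · |zₙ|^{2/n}. Then at every point z ∈ ℂⁿ with zₙ ≠ 0, u is smooth in a neighborhood of z, the complex Hessian matrix (∂²u/∂zᵢ∂z̄ⱼ(z))_{1≤i,j≤n} is Hermitian positive definite, and its determinant equals 1. -/

import Mathlib

open scoped ComplexOrder

/-- The Wirtinger derivative `∂f/∂zᵢ = (∂f/∂xᵢ − √−1 ∂f/∂yᵢ)/2` of
`f : ℂⁿ → ℂ` at `z`, computed via the real Fréchet derivative. -/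
noncomputable def wirtingerDZ {n : ℕ} (f : (Fin n → ℂ) → ℂ) (i : Fin n) (z : Fin n → ℂ) : ℂ :=
  ((fderiv ℝ f z) (Pi.single i 1) - Complex.I * (fderiv ℝ f z) (Pi.single i Complex.I)) / 2

/-- The conjugate Wirtinger derivative `∂f/∂z̄ᵢ = (∂f/∂xᵢ + √−1 ∂f/∂yᵢ)/2` of
`f : ℂⁿ → ℂ` at `z`, computed via the real Fréchet derivative. -/
noncomputable def wirtingerDZBar {n : ℕ} (f : (Fin n → ℂ) → ℂ) (i : Fin n) (z : Fin n → ℂ) : ℂ :=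
  ((fderiv ℝ f z) (Pi.single i 1) + Complex.I * (fderiv ℝ f z) (Pi.single i Complex.I)) / 2

open Complex
open scoped Matrix

noncomputable def dsq (t : ℂ) : ℂ →L[ℝ] ℝ := (2*t.re) • Complex.reCLM + (2*t.im) • Complex.imCLM

lemma dsq_apply (t v : ℂ) : dsq t v = 2*t.re*v.re + 2*t.im*v.im := by
  simp [dsq]

lemma hasFDerivAt_normSq (t : ℂ) : HasFDerivAt Complex.normSq (dsq t) t := by
  have h : HasFDerivAt (fun z : ℂ => z.re * z.re + z.im * z.im)
      ((t.re • Complex.reCLM + t.re • Complex.reCLM) + (t.im • Complex.imCLM + t.im • Complex.imCLM)) t :=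
    (Complex.reCLM.hasFDerivAt.mul Complex.reCLM.hasFDerivAt).add
      (Complex.imCLM.hasFDerivAt.mul Complex.imCLM.hasFDerivAt)
  have he : (fun z : ℂ => z.re * z.re + z.im * z.im) = Complex.normSq := by
    funext z; simp [Complex.normSq_apply]
  rw [he] at h
  convert h using 1
  ext v
  simp [dsq]
  ring

def SS (n : ℕ) (w : Fin n → ℂ) : ℝ := ∑ i : Fin n, if (i:ℕ) < n - 1 then Complex.normSq (w i) else 0

noncomputable def dS (n : ℕ) (w : Fin n → ℂ) : (Fin n → ℂ) →L[ℝ] ℝ :=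
  ∑ i : Fin n, if (i:ℕ) < n - 1 then (dsq (w i)).comp (ContinuousLinearMap.proj i) else 0

lemma hasFDerivAt_SS (n : ℕ) (w : Fin n → ℂ) : HasFDerivAt (SS n) (dS n w) w := by
  rw [show SS n = fun w => ∑ i : Fin n, if (i:ℕ) < n - 1 then Complex.normSq (w i) else 0 from rfl]
  apply HasFDerivAt.fun_sum
  intro i _
  by_cases h : (i:ℕ) < n - 1
  · simp only [if_pos h]
    exact (hasFDerivAt_normSq (w i)).comp w (hasFDerivAt_apply i w)
  · simp only [if_neg h]
    exact hasFDerivAt_const 0 w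

lemma dS_single (n : ℕ) (w : Fin n → ℂ) (j : Fin n) (x : ℂ) :
    dS n w (Pi.single j x) = if (j:ℕ) < n - 1 then 2*(w j).re*x.re + 2*(w j).im*x.im else 0 := by
  rw [dS, ContinuousLinearMap.sum_apply, Finset.sum_eq_single j]
  · split_ifs with h
    · simp [dsq_apply]
    · simp
  · intro i _ hij
    split_ifs with h
    · simp [Pi.single_eq_of_ne hij]
    · simp
  · intro h; exact absurd (Finset.mem_univ j) h

noncomputable def aa (n : ℕ) : ℝ := 2 / n
noncomputable def cc (n : ℕ) : ℝ := (n:ℝ) ^ aa n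

lemma hasFDerivAt_rp (n : ℕ) (L : Fin n) (b : ℝ) (w : Fin n → ℂ) (hw : w L ≠ 0) :
    HasFDerivAt (fun w' : Fin n → ℂ => Complex.normSq (w' L) ^ b)
      ((b * Complex.normSq (w L) ^ (b-1)) • ((dsq (w L)).comp (ContinuousLinearMap.proj L))) w := by
  have h1 : HasFDerivAt (fun w' : Fin n → ℂ => Complex.normSq (w' L))
      ((dsq (w L)).comp (ContinuousLinearMap.proj L)) w :=
    (hasFDerivAt_normSq (w L)).comp w (hasFDerivAt_apply L w)
  exact h1.rpow_const (Or.inl (Complex.normSq_pos.mpr hw).ne')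

noncomputable def Du (n : ℕ) (L : Fin n) (w : Fin n → ℂ) : (Fin n → ℂ) →L[ℝ] ℝ :=
  (cc n * (1 + SS n w)) •
      ((aa n / 2 * Complex.normSq (w L) ^ (aa n / 2 - 1)) • ((dsq (w L)).comp (ContinuousLinearMap.proj L)))
    + (Complex.normSq (w L) ^ (aa n / 2)) • (cc n • ((0 : (Fin n → ℂ) →L[ℝ] ℝ) + dS n w))

lemma hasFDerivAt_u (n : ℕ) (L : Fin n) (w : Fin n → ℂ) (hw : w L ≠ 0) :
    HasFDerivAt (fun w' => cc n * (1 + SS n w') * Complex.normSq (w' L) ^ (aa n / 2))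
      (Du n L w) w :=
  (((hasFDerivAt_const (1:ℝ) w).add (hasFDerivAt_SS n w)).const_mul (cc n)).mul
    (hasFDerivAt_rp n L (aa n / 2) w hw)

noncomputable def Uc (n : ℕ) (L : Fin n) (w : Fin n → ℂ) : ℂ :=
  ((cc n * (1 + SS n w) * Complex.normSq (w L) ^ (aa n / 2) : ℝ) : ℂ)

lemma hasFDerivAt_Uc (n : ℕ) (L : Fin n) (w : Fin n → ℂ) (hw : w L ≠ 0) :
    HasFDerivAt (Uc n L) (Complex.ofRealCLM.comp (Du n L w)) w :=
  Complex.ofRealCLM.hasFDerivAt.comp w (hasFDerivAt_u n L w hw)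

noncomputable def G (n : ℕ) (L j : Fin n) (w : Fin n → ℂ) : ℂ :=
  if (j:ℕ) < n - 1 then ((cc n * Complex.normSq (w L) ^ (aa n / 2) : ℝ) : ℂ) * w j
  else ((cc n * (aa n / 2) * ((1 + SS n w) * Complex.normSq (w L) ^ (aa n / 2 - 1)) : ℝ) : ℂ) * w L

lemma lt_iff_ne (n : ℕ) (L j : Fin n) (hL : (L:ℕ) = n - 1) :
    ((j:ℕ) < n - 1) ↔ j ≠ L := by
  have := j.isLt
  rw [Ne, Fin.ext_iff, hL]
  omega

lemma wbar_eq (n : ℕ) (L : Fin n) (hL : (L:ℕ) = n - 1) (j : Fin n)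
    (w : Fin n → ℂ) (hw : w L ≠ 0) :
    wirtingerDZBar (Uc n L) j w = G n L j w := by
  rw [wirtingerDZBar, (hasFDerivAt_Uc n L w hw).fderiv]
  by_cases hj : (j:ℕ) < n - 1
  · have hjL : L ≠ j := fun h => ((lt_iff_ne n L j hL).mp hj h.symm)
    rw [G, if_pos hj]
    simp only [Du, ContinuousLinearMap.comp_apply, ContinuousLinearMap.add_apply,
      ContinuousLinearMap.smul_apply, ContinuousLinearMap.zero_apply,
      ContinuousLinearMap.proj_apply, Complex.ofRealCLM_apply, dS_single, if_pos hj,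
      Pi.single_eq_of_ne hjL, map_zero, smul_eq_mul, Complex.one_re, Complex.one_im,
      Complex.I_re, Complex.I_im]
    push_cast
    rw [Complex.ext_iff]
    constructor <;> simp <;> ring
  · have hjL : j = L := by
      by_contra h
      exact hj ((lt_iff_ne n L j hL).mpr h)
    subst hjL
    rw [G, if_neg hj]
    simp only [Du, ContinuousLinearMap.comp_apply, ContinuousLinearMap.add_apply,
      ContinuousLinearMap.smul_apply, ContinuousLinearMap.zero_apply,
      ContinuousLinearMap.proj_apply, Complex.ofRealCLM_apply, dS_single, if_neg hj,
      Pi.single_eq_same, dsq_apply, smul_eq_mul, Complex.one_re, Complex.one_im,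
      Complex.I_re, Complex.I_im]
    push_cast
    rw [Complex.ext_iff]
    constructor <;> simp <;> ring

noncomputable def Hent (n : ℕ) (L : Fin n) (z : Fin n → ℂ) (i j : Fin n) : ℂ :=
  if (i:ℕ) < n - 1 then
    (if (j:ℕ) < n - 1 then
      (if i = j then ((cc n * Complex.normSq (z L) ^ (aa n / 2) : ℝ) : ℂ) else 0)
     else ((cc n * (aa n / 2) * Complex.normSq (z L) ^ (aa n / 2 - 1) : ℝ) : ℂ) *
        ((starRingEnd ℂ) (z i) * z L))
  else
    (if (j:ℕ) < n - 1 then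
      ((cc n * (aa n / 2) * Complex.normSq (z L) ^ (aa n / 2 - 1) : ℝ) : ℂ) *
        (z j * (starRingEnd ℂ) (z L))
     else ((cc n * (aa n / 2) * (aa n / 2) * ((1 + SS n z) * Complex.normSq (z L) ^ (aa n / 2 - 1)) : ℝ) : ℂ))

lemma dz_G (n : ℕ) (L : Fin n) (hL : (L:ℕ) = n - 1) (i j : Fin n)
    (z : Fin n → ℂ) (hz : z L ≠ 0) :
    wirtingerDZ (G n L j) i z = Hent n L z i j := by
  have hm2 : Complex.normSq (z L) ^ (aa n / 2 - 1) =
      Complex.normSq (z L) ^ (aa n / 2 - 2) * Complex.normSq (z L) := by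
    rw [← Real.rpow_add_one (Complex.normSq_pos.mpr hz).ne']
    congr 1
    ring
  by_cases hj : (j:ℕ) < n - 1
  · have hjL : L ≠ j := fun h => ((lt_iff_ne n L j hL).mp hj h.symm)
    have hG : G n L j = fun w => ((cc n * Complex.normSq (w L) ^ (aa n / 2) : ℝ) : ℂ) * w j :=
      funext fun w => if_pos hj
    have h1 : HasFDerivAt (fun w : Fin n → ℂ => ((cc n * Complex.normSq (w L) ^ (aa n / 2) : ℝ) : ℂ))
        (Complex.ofRealCLM.comp ((cc n) • ((aa n / 2 * Complex.normSq (z L) ^ (aa n / 2 - 1)) •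
          ((dsq (z L)).comp (ContinuousLinearMap.proj L))))) z :=
      Complex.ofRealCLM.hasFDerivAt.comp z ((hasFDerivAt_rp n L (aa n / 2) z hz).const_mul (cc n))
    have h2 := h1.fun_mul (hasFDerivAt_apply j z)
    rw [wirtingerDZ, hG, h2.fderiv]
    by_cases hi : (i:ℕ) < n - 1
    · have hiL : L ≠ i := fun h => ((lt_iff_ne n L i hL).mp hi h.symm)
      by_cases hij : i = j
      · subst hij
        rw [Hent, if_pos hi, if_pos hj, if_pos rfl]
        simp only [ContinuousLinearMap.add_apply, ContinuousLinearMap.smul_apply,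
          ContinuousLinearMap.comp_apply, ContinuousLinearMap.proj_apply,
          Complex.ofRealCLM_apply, Pi.single_eq_same, Pi.single_eq_of_ne hiL,
          map_zero, smul_eq_mul]
        push_cast
        rw [Complex.ext_iff]
        constructor <;> simp <;> ring
      · rw [Hent, if_pos hi, if_pos hj, if_neg hij]
        have hji : j ≠ i := fun h => hij h.symm
        simp only [ContinuousLinearMap.add_apply, ContinuousLinearMap.smul_apply,
          ContinuousLinearMap.comp_apply, ContinuousLinearMap.proj_apply,
          Complex.ofRealCLM_apply, Pi.single_eq_of_ne hji, Pi.single_eq_of_ne hiL,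
          map_zero, smul_eq_mul]
        simp
    · have hiL : i = L := by
        by_contra h
        exact hi ((lt_iff_ne n L i hL).mpr h)
      rw [hiL] at hi ⊢
      rw [Hent, if_neg hi, if_pos hj]
      have hji : j ≠ L := fun h => hjL h.symm
      simp only [ContinuousLinearMap.add_apply, ContinuousLinearMap.smul_apply,
        ContinuousLinearMap.comp_apply, ContinuousLinearMap.proj_apply,
        Complex.ofRealCLM_apply, Pi.single_eq_of_ne hji, Pi.single_eq_same,
        dsq_apply, smul_eq_mul, Complex.one_re, Complex.one_im, Complex.I_re, Complex.I_im]
      push_cast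
      rw [Complex.ext_iff]
      constructor <;> simp [Complex.conj_re, Complex.conj_im] <;> ring
  · have hjL : j = L := by
      by_contra h
      exact hj ((lt_iff_ne n L j hL).mpr h)
    rw [hjL] at hj ⊢
    have hG : G n L L = fun w =>
        ((cc n * (aa n / 2) * ((1 + SS n w) * Complex.normSq (w L) ^ (aa n / 2 - 1)) : ℝ) : ℂ) * w L :=
      funext fun w => if_neg hj
    have h1 : HasFDerivAt
        (fun w : Fin n → ℂ =>
          ((cc n * (aa n / 2) * ((1 + SS n w) * Complex.normSq (w L) ^ (aa n / 2 - 1)) : ℝ) : ℂ))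
        (Complex.ofRealCLM.comp ((cc n * (aa n / 2)) •
          ((1 + SS n z) • (((aa n / 2 - 1) * Complex.normSq (z L) ^ (aa n / 2 - 1 - 1)) •
              ((dsq (z L)).comp (ContinuousLinearMap.proj L)))
            + (Complex.normSq (z L) ^ (aa n / 2 - 1)) • ((0 : (Fin n → ℂ) →L[ℝ] ℝ) + dS n z)))) z :=
      Complex.ofRealCLM.hasFDerivAt.comp z
        ((((hasFDerivAt_const (1:ℝ) z).add (hasFDerivAt_SS n z)).mul
          (hasFDerivAt_rp n L (aa n / 2 - 1) z hz)).const_mul (cc n * (aa n / 2)))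
    have h2 := h1.fun_mul (hasFDerivAt_apply L z)
    rw [wirtingerDZ, hG, h2.fderiv]
    by_cases hi : (i:ℕ) < n - 1
    · have hiL : L ≠ i := fun h => ((lt_iff_ne n L i hL).mp hi h.symm)
      have hij : i ≠ L := (lt_iff_ne n L i hL).mp hi
      rw [Hent, if_pos hi, if_neg hj]
      simp only [ContinuousLinearMap.add_apply, ContinuousLinearMap.smul_apply,
        ContinuousLinearMap.comp_apply, ContinuousLinearMap.proj_apply,
        ContinuousLinearMap.zero_apply, Complex.ofRealCLM_apply,
        Pi.single_eq_of_ne hij.symm, Pi.single_eq_of_ne hiL, map_zero,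
        dS_single, if_pos hi, smul_eq_mul, Complex.one_re, Complex.one_im,
        Complex.I_re, Complex.I_im]
      push_cast
      rw [Complex.ext_iff]
      constructor <;> simp [Complex.conj_re, Complex.conj_im] <;> ring
    · have hiL : i = L := by
        by_contra h
        exact hi ((lt_iff_ne n L i hL).mpr h)
      rw [hiL] at hi ⊢
      rw [Hent, if_neg hi, if_neg hj]
      simp only [ContinuousLinearMap.add_apply, ContinuousLinearMap.smul_apply,
        ContinuousLinearMap.comp_apply, ContinuousLinearMap.proj_apply,
        ContinuousLinearMap.zero_apply, Complex.ofRealCLM_apply,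
        Pi.single_eq_same, dS_single, if_neg hi, dsq_apply, smul_eq_mul,
        Complex.one_re, Complex.one_im, Complex.I_re, Complex.I_im]
      rw [hm2]
      have hns : Complex.normSq (z L) = (z L).re * (z L).re + (z L).im * (z L).im :=
        Complex.normSq_apply _
      rw [hns]
      push_cast
      rw [Complex.ext_iff]
      constructor <;> simp <;> ring

section MatrixPart

variable (n : ℕ) (L : Fin n) (z : Fin n → ℂ)

noncomputable def DD : Matrix (Fin n) (Fin n) ℂ :=
  Matrix.diagonal fun i => if (i:ℕ) < n - 1
    then ((cc n * Complex.normSq (z L) ^ (aa n / 2) : ℝ) : ℂ)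
    else ((cc n * (aa n / 2) * (aa n / 2) * Complex.normSq (z L) ^ (aa n / 2 - 1) : ℝ) : ℂ)

noncomputable def EE : Matrix (Fin n) (Fin n) ℂ :=
  Matrix.of fun i j => if i = j then 1 else if (j:ℕ) < n - 1 then 0
    else ((aa n / 2 * (Complex.normSq (z L))⁻¹ : ℝ) : ℂ) * ((starRingEnd ℂ) (z i) * z L)

set_option maxHeartbeats 2000000 in
lemma hent_fact (hL : (L:ℕ) = n - 1) (hz : z L ≠ 0) :
    Matrix.of (fun i j => Hent n L z i j) = (EE n L z)ᴴ * DD n L z * EE n L z := by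
  have hm : (0:ℝ) < Complex.normSq (z L) := Complex.normSq_pos.mpr hz
  have hP : Complex.normSq (z L) ^ (aa n / 2) ≠ 0 := (Real.rpow_pos_of_pos hm _).ne'
  have hRm : Complex.normSq (z L) ^ (aa n / 2 - 1) * Complex.normSq (z L)
      = Complex.normSq (z L) ^ (aa n / 2) := by
    rw [← Real.rpow_add_one hm.ne']
    congr 1; ring
  have hR : (0:ℝ) < Complex.normSq (z L) ^ (aa n / 2 - 1) := Real.rpow_pos_of_pos hm _
  have hLcond : ¬ ((L:ℕ) < n - 1) := by rw [hL]; omega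
  funext i j
  rw [Matrix.mul_assoc]
  rw [Matrix.mul_apply]
  simp only [Matrix.of_apply]
  by_cases hi : (i:ℕ) < n - 1
  · rw [Finset.sum_eq_single i]
    · by_cases hj : (j:ℕ) < n - 1
      · rw [Hent, if_pos hi, if_pos hj]
        by_cases hij : i = j
        · subst hij
          simp [EE, DD, Matrix.conjTranspose_apply, Matrix.diagonal_mul, hi]
        · simp [EE, DD, Matrix.conjTranspose_apply, Matrix.diagonal_mul, hij, hj]
      · have hij : i ≠ j := fun h => hj (h ▸ hi)
        rw [Hent, if_pos hi, if_neg hj]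
        simp only [EE, DD, Matrix.conjTranspose_apply, Matrix.diagonal_mul, Matrix.of_apply,
          if_pos rfl, if_neg hij, if_neg hj, if_pos hi, Complex.star_def, map_one, one_mul]
        rw [← hRm]
        push_cast
        have hm' : (Complex.normSq (z L) : ℂ) ≠ 0 := Complex.ofReal_ne_zero.mpr hm.ne'
        field_simp [hm']
        simp
    · intro b _ hb
      simp only [EE, Matrix.conjTranspose_apply, Matrix.of_apply, if_neg hb, if_pos hi,
        star_zero, zero_mul]
    · intro h; exact absurd (Finset.mem_univ i) h
  · have hiL : i = L := by
      by_contra h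
      exact hi ((lt_iff_ne n L i hL).mpr h)
    by_cases hj : (j:ℕ) < n - 1
    · rw [Hent, if_neg hi, if_pos hj]
      have hji : j ≠ i := fun h => hi (h ▸ hj)
      rw [Finset.sum_eq_single j]
      · have hjL2 : j ≠ L := (lt_iff_ne n L j hL).mp hj
        simp only [EE, DD, Matrix.conjTranspose_apply, Matrix.diagonal_mul, Matrix.of_apply,
          if_pos rfl, if_neg hji, if_neg hi, if_pos hj, hiL, if_neg hjL2, if_neg hLcond,
          Complex.star_def, map_mul, Complex.conj_ofReal, Complex.conj_conj, mul_one, map_one]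
        rw [← hRm]
        push_cast
        have hm' : (Complex.normSq (z L) : ℂ) ≠ 0 := Complex.ofReal_ne_zero.mpr hm.ne'
        field_simp [hm']
      · intro b _ hb
        simp only [EE, DD, Matrix.conjTranspose_apply, Matrix.diagonal_mul, Matrix.of_apply,
          if_neg hb, if_pos hj, mul_zero, zero_mul]
      · intro h; exact absurd (Finset.mem_univ j) h
    · have hjL : j = L := by
        by_contra h
        exact hj ((lt_iff_ne n L j hL).mpr h)
      rw [Hent, if_neg hi, if_neg hj, hiL, hjL]
      have hterm : ∀ k : Fin n, (EE n L z)ᴴ L k * (DD n L z * EE n L z) k L =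
          (((if (k:ℕ) < n - 1
            then cc n * (aa n / 2) * (aa n / 2) * Complex.normSq (z L) ^ (aa n / 2 - 1) *
              Complex.normSq (z k)
            else cc n * (aa n / 2) * (aa n / 2) * Complex.normSq (z L) ^ (aa n / 2 - 1)) : ℝ) : ℂ) := by
        intro k
        by_cases hk : (k:ℕ) < n - 1
        · have hkL : k ≠ L := (lt_iff_ne n L k hL).mp hk
          rw [if_pos hk]
          simp only [EE, DD, Matrix.conjTranspose_apply, Matrix.diagonal_mul, Matrix.of_apply,
            if_neg hkL, if_neg hLcond, if_pos hk, Complex.star_def, map_mul, Complex.conj_ofReal, Complex.conj_conj]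
          rw [← hRm]
          push_cast
          have hm' : (Complex.normSq (z L) : ℂ) ≠ 0 := Complex.ofReal_ne_zero.mpr hm.ne'
          field_simp [hm']
          rw [Complex.ext_iff]
          simp only [Complex.normSq_apply]
          constructor
          · simp; ring
          · simp; ring
        · have hkL : k = L := by
            by_contra h
            exact hk ((lt_iff_ne n L k hL).mpr h)
          rw [if_neg hk]
          simp only [EE, DD, Matrix.conjTranspose_apply, Matrix.diagonal_mul, Matrix.of_apply,
            hkL, if_pos rfl, if_neg hk, if_neg hLcond, ite_true, star_one, map_one, one_mul,
            mul_one]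
      rw [Finset.sum_congr rfl fun k _ => hterm k]
      rw [← Finset.sum_erase_add _ _ (Finset.mem_univ L)]
      rw [if_neg hLcond]
      have hcongr : ∀ k ∈ Finset.univ.erase L,
          (((if (k:ℕ) < n - 1
            then cc n * (aa n / 2) * (aa n / 2) * Complex.normSq (z L) ^ (aa n / 2 - 1) *
              Complex.normSq (z k)
            else cc n * (aa n / 2) * (aa n / 2) * Complex.normSq (z L) ^ (aa n / 2 - 1)) : ℝ) : ℂ)
          = ((cc n * (aa n / 2) * (aa n / 2) * Complex.normSq (z L) ^ (aa n / 2 - 1) *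
              Complex.normSq (z k) : ℝ) : ℂ) := by
        intro k hk
        rw [if_pos ((lt_iff_ne n L k hL).mpr (Finset.mem_erase.mp hk).1)]
      rw [Finset.sum_congr rfl hcongr]
      have hSSe : SS n z = ∑ k ∈ Finset.univ.erase L, Complex.normSq (z k) := by
        rw [SS, ← Finset.sum_erase_add _ _ (Finset.mem_univ L), if_neg hLcond, add_zero]
        exact Finset.sum_congr rfl fun k hk =>
          if_pos ((lt_iff_ne n L k hL).mpr (Finset.mem_erase.mp hk).1)
      rw [hSSe]
      push_cast
      rw [← Finset.mul_sum]
      ring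


lemma det_EE (hL : (L:ℕ) = n - 1) : (EE n L z).det = 1 := by
  have ht : (EE n L z).BlockTriangular id := by
    intro i j hij
    have h1 : i ≠ j := (ne_of_lt hij).symm
    have h2 : (j:ℕ) < n - 1 := by
      have := i.isLt
      have h3 : (j:ℕ) < (i:ℕ) := hij
      omega
    simp [EE, h1, h2]
  rw [Matrix.det_of_upperTriangular ht]
  simp [EE]

lemma scalar_det (hn : 2 ≤ n) (m : ℝ) (hm : 0 < m) :
    (cc n * m ^ (aa n / 2)) ^ (n-1) * (cc n * (aa n / 2) * (aa n / 2) * m ^ (aa n / 2 - 1)) = 1 := by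
  have hN : (0:ℝ) < n := by positivity
  have hN' : (n:ℝ) ≠ 0 := hN.ne'
  have e1 : (m ^ (aa n / 2)) ^ (n-1) = m ^ (aa n / 2 * (n-1 : ℕ)) := by
    rw [Real.rpow_mul hm.le, Real.rpow_natCast]
  have e2 : m ^ (aa n / 2 * (n-1 : ℕ)) * m ^ (aa n / 2 - 1) = 1 := by
    rw [← Real.rpow_add hm]
    have : aa n / 2 * (n-1 : ℕ) + (aa n / 2 - 1) = 0 := by
      have hc : ((n-1 : ℕ) : ℝ) = (n:ℝ) - 1 := by
        push_cast [Nat.cast_sub (by omega : 1 ≤ n)]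
        ring
      rw [hc, aa]
      field_simp
      ring
    rw [this, Real.rpow_zero]
  have e3 : cc n ^ (n-1) * cc n = (n:ℝ)^2 := by
    rw [← pow_succ]
    have : n - 1 + 1 = n := by omega
    rw [this, cc, ← Real.rpow_natCast ((n:ℝ) ^ aa n) n, ← Real.rpow_mul hN.le]
    have : aa n * n = 2 := by rw [aa]; field_simp
    rw [this]
    rw [show ((2:ℝ) = ((2:ℕ):ℝ)) by norm_num, Real.rpow_natCast]
  have e4 : aa n / 2 = 1 / n := by rw [aa]; field_simp
  calc (cc n * m ^ (aa n / 2)) ^ (n-1) * (cc n * (aa n / 2) * (aa n / 2) * m ^ (aa n / 2 - 1))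
      = (cc n ^ (n-1) * cc n) * (aa n / 2) * (aa n / 2) *
        ((m ^ (aa n / 2)) ^ (n-1) * m ^ (aa n / 2 - 1)) := by ring
    _ = 1 := by
        rw [e1, e3, e2, e4]
        field_simp

lemma det_hent (hn : 2 ≤ n) (hL : (L:ℕ) = n - 1) (hz : z L ≠ 0) :
    (Matrix.of (fun i j => Hent n L z i j)).det = 1 := by
  have hm : (0:ℝ) < Complex.normSq (z L) := Complex.normSq_pos.mpr hz
  have hLcond : ¬ ((L:ℕ) < n - 1) := by rw [hL]; omega
  rw [hent_fact n L z hL hz, Matrix.det_mul, Matrix.det_mul, Matrix.det_conjTranspose,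
    det_EE n L z hL, star_one, one_mul, mul_one, DD, Matrix.det_diagonal]
  rw [← Finset.prod_erase_mul _ _ (Finset.mem_univ L), if_neg hLcond]
  have hc : ∀ i ∈ Finset.univ.erase L,
      (if (i:ℕ) < n - 1 then ((cc n * Complex.normSq (z L) ^ (aa n / 2) : ℝ) : ℂ)
        else ((cc n * (aa n / 2) * (aa n / 2) * Complex.normSq (z L) ^ (aa n / 2 - 1) : ℝ) : ℂ))
      = ((cc n * Complex.normSq (z L) ^ (aa n / 2) : ℝ) : ℂ) := fun i hi =>
    if_pos ((lt_iff_ne n L i hL).mpr (Finset.mem_erase.mp hi).1)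
  rw [Finset.prod_congr rfl hc, Finset.prod_const,
    Finset.card_erase_of_mem (Finset.mem_univ L), Finset.card_univ, Fintype.card_fin,
    ← Complex.ofReal_pow, ← Complex.ofReal_mul]
  rw [show (1:ℂ) = ((1:ℝ):ℂ) by norm_num]
  congr 1
  exact scalar_det n hn _ hm

lemma posdef_hent (hn : 2 ≤ n) (hL : (L:ℕ) = n - 1) (hz : z L ≠ 0) :
    (Matrix.of (fun i j => Hent n L z i j)).PosDef := by
  have hm : (0:ℝ) < Complex.normSq (z L) := Complex.normSq_pos.mpr hz
  have hN : (0:ℝ) < n := by positivity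
  have hcc : (0:ℝ) < cc n := Real.rpow_pos_of_pos hN _
  have haa : (0:ℝ) < aa n := by rw [aa]; positivity
  have hDpos : (DD n L z).PosDef := by
    rw [DD]
    apply Matrix.PosDef.diagonal
    intro i
    split_ifs
    · rw [Complex.zero_lt_real]
      positivity
    · rw [Complex.zero_lt_real]
      positivity
  rw [hent_fact n L z hL hz]
  rw [Matrix.posDef_iff_dotProduct_mulVec]
  constructor
  · exact Matrix.isHermitian_conjTranspose_mul_mul _ hDpos.isHermitian
  · intro x hx
    have hy : EE n L z *ᵥ x ≠ 0 := by
      intro h0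
      have hinj : Function.Injective (EE n L z).mulVec :=
        Matrix.mulVec_injective_iff_isUnit.mpr
          (by rw [Matrix.isUnit_iff_isUnit_det, det_EE n L z hL]; exact isUnit_one)
      exact hx (hinj (by rw [h0, Matrix.mulVec_zero]))
    have hrw : ((EE n L z)ᴴ * DD n L z * EE n L z) *ᵥ x
        = (EE n L z)ᴴ *ᵥ (DD n L z *ᵥ (EE n L z *ᵥ x)) := by
      rw [← Matrix.mulVec_mulVec, ← Matrix.mulVec_mulVec]
    rw [hrw, Matrix.dotProduct_mulVec (star x), ← Matrix.star_mulVec]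
    exact hDpos.dotProduct_mulVec_pos hy

lemma contDiff_normSq : ContDiff ℝ (⊤ : ℕ∞) Complex.normSq := by
  have he : (fun z : ℂ => z.re * z.re + z.im * z.im) = Complex.normSq := by
    funext z; simp [Complex.normSq_apply]
  rw [← he]
  exact (Complex.reCLM.contDiff.mul Complex.reCLM.contDiff).add
    (Complex.imCLM.contDiff.mul Complex.imCLM.contDiff)

lemma contDiff_SS : ContDiff ℝ (⊤ : ℕ∞) (SS n) := by
  rw [show SS n = fun w => ∑ i : Fin n, if (i:ℕ) < n - 1 then Complex.normSq (w i) else 0 from rfl]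
  apply ContDiff.sum
  intro i _
  by_cases h : (i:ℕ) < n - 1
  · simp only [if_pos h]
    exact contDiff_normSq.comp (contDiff_apply ℝ ℂ i)
  · simp only [if_neg h]
    exact contDiff_const

lemma contDiffAt_clean (hz : z L ≠ 0) :
    ContDiffAt ℝ (⊤ : ℕ∞) (fun w => cc n * (1 + SS n w) * Complex.normSq (w L) ^ (aa n / 2)) z := by
  have hm : Complex.normSq (z L) ≠ 0 := (Complex.normSq_pos.mpr hz).ne'
  have h1 : ContDiffAt ℝ (⊤ : ℕ∞) (fun w : Fin n → ℂ => Complex.normSq (w L) ^ (aa n / 2)) z := by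
    have hr : ContDiffAt ℝ (⊤ : ℕ∞) (fun x : ℝ => x ^ (aa n / 2)) (Complex.normSq (z L)) :=
      Real.contDiffAt_rpow_const_of_ne hm
    exact hr.comp z ((contDiff_normSq.comp (contDiff_apply ℝ ℂ L)).contDiffAt)
  exact ((contDiffAt_const.mul ((contDiffAt_const.add (contDiff_SS n).contDiffAt))).mul h1 :)

lemma u_clean (hn : 2 ≤ n) (hL : (L:ℕ) = n - 1) :
    (fun w : Fin n → ℂ => (n : ℝ) ^ ((2 : ℝ) / n) *
      (1 + ∑ i : Fin n, if (i : ℕ) < n - 1 then ‖w i‖ ^ 2 else 0) * ‖w L‖ ^ ((2 : ℝ) / n))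
    = fun w => cc n * (1 + SS n w) * Complex.normSq (w L) ^ (aa n / 2) := by
  funext w
  have h2 : ∀ t : ℂ, ‖t‖ ^ 2 = Complex.normSq t := fun t => by
    rw [← Complex.sq_norm]
  have h3 : ‖w L‖ ^ ((2:ℝ)/n) = Complex.normSq (w L) ^ (aa n / 2) := by
    rw [Complex.normSq_eq_norm_sq, ← Real.rpow_natCast ‖w L‖ 2,
      ← Real.rpow_mul (norm_nonneg _)]
    congr 1
    rw [aa]
    push_cast
    ring
  have h4 : (∑ i : Fin n, if (i:ℕ) < n - 1 then ‖w i‖ ^ 2 else 0)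
      = ∑ i : Fin n, if (i:ℕ) < n - 1 then Complex.normSq (w i) else 0 :=
    Finset.sum_congr rfl fun i _ => by split_ifs <;> simp [← h2]
  rw [h3, SS, cc, aa, h4]

lemma hess (hL : (L:ℕ) = n - 1) (i j : Fin n) (hz : z L ≠ 0) :
    wirtingerDZ (fun w => wirtingerDZBar (Uc n L) j w) i z = Hent n L z i j := by
  have hopen : ∀ᶠ w in nhds z, w L ≠ 0 :=
    ((continuous_apply L).continuousAt).eventually_ne hz
  have hev : (fun w => wirtingerDZBar (Uc n L) j w) =ᶠ[nhds z] G n L j :=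
    hopen.mono fun w hw => wbar_eq n L hL j w hw
  have hfd : fderiv ℝ (fun w => wirtingerDZBar (Uc n L) j w) z = fderiv ℝ (G n L j) z :=
    hev.fderiv_eq
  have h2 := dz_G n L hL i j z hz
  rw [wirtingerDZ] at h2 ⊢
  rw [hfd]
  exact h2

end MatrixPart

/-- the Pogorelov-type example
`u(z) = n^{2/n}(1 + |z₁|² + ⋯ + |z_{n−1}|²)|zₙ|^{2/n}` is smooth near every point with
`zₙ ≠ 0`, and there its complex Hessian `(∂²u/∂zᵢ∂z̄ⱼ)` is Hermitian positive definite
with determinant `1`. -/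
theorem pogorelov_example (n : ℕ) (hn : 2 ≤ n)
    (u : (Fin n → ℂ) → ℝ)
    (hu : u = fun z => (n : ℝ) ^ ((2 : ℝ) / n) *
      (1 + ∑ i : Fin n, if (i : ℕ) < n - 1 then ‖z i‖ ^ 2 else 0) *
      ‖z ⟨n - 1, by omega⟩‖ ^ ((2 : ℝ) / n))
    (z : Fin n → ℂ) (hz : z ⟨n - 1, by omega⟩ ≠ 0) :
    ContDiffAt ℝ (⊤ : ℕ∞) u z ∧
    (Matrix.of fun i j : Fin n =>
        wirtingerDZ (fun w => wirtingerDZBar (fun w' => ((u w' : ℝ) : ℂ)) j w) i z).PosDef ∧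
    (Matrix.of fun i j : Fin n =>
        wirtingerDZ (fun w => wirtingerDZBar (fun w' => ((u w' : ℝ) : ℂ)) j w) i z).det = 1 := by
  have hn1 : n - 1 < n := by omega
  set L : Fin n := ⟨n - 1, hn1⟩ with hLdef
  have hL : (L:ℕ) = n - 1 := rfl
  have hz' : z L ≠ 0 := hz
  have hueq : u = fun w => cc n * (1 + SS n w) * Complex.normSq (w L) ^ (aa n / 2) := by
    rw [hu]
    exact u_clean n L hn hL
  have hUc : (fun w' => ((u w' : ℝ) : ℂ)) = Uc n L := by
    funext w'
    rw [hueq]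
    rfl
  have hmat : (Matrix.of fun i j : Fin n =>
      wirtingerDZ (fun w => wirtingerDZBar (fun w' => ((u w' : ℝ) : ℂ)) j w) i z)
      = Matrix.of (fun i j => Hent n L z i j) := by
    funext i j
    simp only [Matrix.of_apply]
    rw [hUc]
    exact hess n L z hL i j hz'
  refine ⟨?_, ?_, ?_⟩
  · rw [hueq]
    exact contDiffAt_clean n L z hz'
  · rw [hmat]
    exact posdef_hent n L z hn hL hz'
  · rw [hmat]
    exact det_hent n L z hn hL hz'
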